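/- Let s > 0, let n ≥ 0 be an integer, let ρ ∈ S¹, and let A = {ρ e^{2πij/2^n} : j = 0, 1, …, 2^n − 1} be a set of 2^n equally spaced points on S¹. Let y = ρ e^{πi(2j_0+1)/2^n} for some integer j_0, i.e., y is the midpoint of one of the 2^n arcs determined by the points of A. Then Σ_{x ∈ A} |x − y|^{−s} = 2^{−(n+1)} ℒ_s(2^{n+1}) − 2^{−n} ℒ_s(2^n). -/

import Mathlib

open Filter Topology

/-- `ℒ_s(N)`: the Riesz `s`-energy of `N` equally spaced points on the unit circle. -/
noncomputable def Lrz (s : ℝ) (N : ℕ) : ℝ :=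
  (2 : ℝ) ^ (-s) * N * ∑ k ∈ Finset.Icc 1 (N - 1), Real.sin ((k : ℝ) * Real.pi / (N : ℝ)) ^ (-s)

open Complex in
lemma abs_exp_sub_exp' (a b : ℝ) :
    ‖Complex.exp (a * I) - Complex.exp (b * I)‖
      = 2 * |Real.sin ((a - b) / 2)| := by
  have h3 : ∀ x : ℂ, Complex.exp (x * I) - Complex.exp (-x * I)
      = 2 * Complex.sin x * I := by
    intro x
    rw [Complex.exp_mul_I, Complex.exp_mul_I, Complex.cos_neg, Complex.sin_neg]
    ring
  have key : Complex.exp (a * I) - Complex.exp (b * I)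
      = Complex.exp ((((a + b) / 2 : ℝ) : ℂ) * I) *
        (2 * Complex.sin ((((a - b) / 2 : ℝ) : ℂ)) * I) := by
    rw [show (a : ℂ) * I = (((a+b)/2 : ℝ) : ℂ) * I + (((a-b)/2 : ℝ) : ℂ) * I by
          push_cast; ring,
        show (b : ℂ) * I = (((a+b)/2 : ℝ) : ℂ) * I + (-(((a-b)/2 : ℝ) : ℂ)) * I by
          push_cast; ring,
        Complex.exp_add, Complex.exp_add, ← mul_sub, h3]
  rw [key, norm_mul, Complex.norm_exp_ofReal_mul_I, one_mul, norm_mul, norm_mul,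
    Complex.norm_two, Complex.norm_I, mul_one, ← Complex.ofReal_sin, Complex.norm_real,
    Real.norm_eq_abs]

lemma toNat_emod_inv' (N : ℕ) (hN : 0 < N) (c : ℤ) (a : ℕ) (ha : a < N) :
    ((((((a : ℤ) + c) % N).toNat : ℤ) - c) % N).toNat = a := by
  have hN' : (N : ℤ) ≠ 0 := by exact_mod_cast hN.ne'
  have h1 : (0:ℤ) ≤ ((a : ℤ) + c) % N := Int.emod_nonneg _ hN'
  rw [Int.toNat_of_nonneg h1]
  have h2 : (((a : ℤ) + c) % N - c) % N = ((a : ℤ) + c - c) % N := by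
    rw [Int.sub_emod, Int.emod_emod_of_dvd _ dvd_rfl, ← Int.sub_emod]
  rw [h2, add_sub_cancel_right, Int.emod_eq_of_lt (by positivity) (by exact_mod_cast ha),
    Int.toNat_natCast]

lemma sum_mod_shift' (N : ℕ) (hN : 0 < N) (f : ℤ → ℝ)
    (hf : ∀ a b : ℤ, (N : ℤ) ∣ (a - b) → f a = f b) (c : ℤ) :
    ∑ j ∈ Finset.range N, f (j + c) = ∑ j ∈ Finset.range N, f j := by
  have hN' : (N : ℤ) ≠ 0 := by exact_mod_cast hN.ne'
  refine Finset.sum_nbij' (i := fun j => (((j : ℤ) + c) % N).toNat)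
    (j := fun m => (((m : ℤ) - c) % N).toNat) ?_ ?_ ?_ ?_ ?_
  · intro a _
    have h1 := Int.emod_nonneg ((a : ℤ) + c) hN'
    have h2 := Int.emod_lt_of_pos ((a : ℤ) + c) (show (0:ℤ) < (N:ℤ) by exact_mod_cast hN)
    simp only [Finset.mem_range]; omega
  · intro a _
    have h1 := Int.emod_nonneg ((a : ℤ) - c) hN'
    have h2 := Int.emod_lt_of_pos ((a : ℤ) - c) (show (0:ℤ) < (N:ℤ) by exact_mod_cast hN)
    simp only [Finset.mem_range]; omega
  · intro a ha
    simp only [Finset.mem_range] at ha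
    simpa [sub_eq_add_neg] using toNat_emod_inv' N hN c a ha
  · intro a ha
    simp only [Finset.mem_range] at ha
    simpa [sub_eq_add_neg] using toNat_emod_inv' N hN (-c) a ha
  · intro a _
    have h1 : (0:ℤ) ≤ ((a : ℤ) + c) % N := Int.emod_nonneg _ hN'
    refine hf _ _ ⟨((a : ℤ) + c) / N, ?_⟩
    rw [Int.toNat_of_nonneg h1, Int.emod_def]; ring

lemma sum_double' (F : ℕ → ℝ) (N : ℕ) :
    ∑ k ∈ Finset.range (2 * N), F k
      = ∑ m ∈ Finset.range N, F (2 * m) + ∑ m ∈ Finset.range N, F (2 * m + 1) := by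
  induction N with
  | zero => simp
  | succ N ih =>
      rw [show 2 * (N + 1) = (2 * N + 1) + 1 by ring, Finset.sum_range_succ,
        Finset.sum_range_succ, Finset.sum_range_succ, Finset.sum_range_succ, ih]
      ring

lemma Icc_sum' (F : ℕ → ℝ) (M : ℕ) :
    ∑ k ∈ Finset.Icc 1 M, F k = ∑ i ∈ Finset.range M, F (i + 1) := by
  induction M with
  | zero => simp
  | succ M ih =>
      rw [Finset.sum_Icc_succ_top (by omega), Finset.sum_range_succ, ih]

lemma riesz_main_aux (s : ℝ) (hs : 0 < s) (N : ℕ) (hN : 0 < N) (j0 : ℤ) :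
    ∑ j ∈ Finset.range N,
        (2 * |Real.sin (Real.pi * (2 * (j : ℝ) - (2 * (j0 : ℝ) + 1)) / (2 * (N : ℝ)))|) ^ (-s)
      = Lrz s (2 * N) / ((2 * N : ℕ) : ℝ) - Lrz s N / (N : ℝ) := by
  have hNR : (0:ℝ) < (N : ℝ) := by exact_mod_cast hN
  have hNR' : (N : ℝ) ≠ 0 := hNR.ne'
  set f : ℤ → ℝ := fun m => |Real.sin (Real.pi * (m : ℝ) / (2 * (N : ℝ)))| ^ (-s) with hf_def
  have hfper : ∀ a b : ℤ, (2 * (N : ℤ)) ∣ (a - b) → f a = f b := by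
    rintro a b ⟨t, ht⟩
    have hab : (a : ℝ) = (b : ℝ) + 2 * (N : ℝ) * (t : ℝ) := by
      exact_mod_cast congrArg (Int.cast : ℤ → ℝ) (by linarith : a = b + 2 * (N:ℤ) * t)
    have harg : Real.pi * (a : ℝ) / (2 * (N : ℝ))
        = Real.pi * (b : ℝ) / (2 * (N : ℝ)) + (t : ℝ) * Real.pi := by
      rw [hab]; field_simp
    have hone : |((-1 : ℝ)) ^ t| = 1 := by
      rcases Int.even_or_odd t with h | h
      · rw [h.neg_one_zpow, abs_one]
      · rw [h.neg_one_zpow, abs_neg, abs_one]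
    simp only [hf_def, harg, Real.sin_add_int_mul_pi, abs_mul, hone, one_mul]
  set g : ℤ → ℝ := fun a => f (2 * a + 1) with hg_def
  have hg : ∀ a b : ℤ, (N : ℤ) ∣ (a - b) → g a = g b := by
    rintro a b ⟨t, ht⟩
    exact hfper _ _ ⟨t, by linarith⟩
  set F : ℕ → ℝ := fun k => Real.sin ((k : ℝ) * Real.pi / (2 * (N : ℝ))) ^ (-s) with hF_def
  set F' : ℕ → ℝ := fun k => Real.sin ((k : ℝ) * Real.pi / (N : ℝ)) ^ (-s) with hF'_def
  have step1 : ∑ j ∈ Finset.range N,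
        (2 * |Real.sin (Real.pi * (2 * (j : ℝ) - (2 * (j0 : ℝ) + 1)) / (2 * (N : ℝ)))|) ^ (-s)
      = (2:ℝ) ^ (-s) * ∑ j ∈ Finset.range N, g ((j : ℤ) + (-(j0 + 1))) := by
    rw [Finset.mul_sum]
    refine Finset.sum_congr rfl fun j _ => ?_
    rw [Real.mul_rpow (by norm_num) (abs_nonneg _)]
    have : ((2 * ((j : ℤ) + (-(j0 + 1))) + 1 : ℤ) : ℝ) = 2 * (j : ℝ) - (2 * (j0 : ℝ) + 1) := by
      push_cast; ring
    simp only [hg_def, hf_def, this]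
  have step2 : ∑ j ∈ Finset.range N, g ((j : ℤ) + (-(j0 + 1)))
      = ∑ j ∈ Finset.range N, F (2 * j + 1) := by
    rw [sum_mod_shift' N hN g hg (-(j0 + 1))]
    refine Finset.sum_congr rfl fun j hj => ?_
    simp only [Finset.mem_range] at hj
    have hlt : (0:ℝ) < Real.pi * (2 * (j:ℝ) + 1) / (2 * (N:ℝ)) := by positivity
    have hlt2 : Real.pi * (2 * (j:ℝ) + 1) / (2 * (N:ℝ)) < Real.pi := by
      rw [div_lt_iff₀ (by positivity)]
      have : (2 * (j:ℝ) + 1) < 2 * (N:ℝ) := by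
        have : (j:ℝ) + 1 ≤ (N:ℝ) := by exact_mod_cast hj
        linarith
      nlinarith [Real.pi_pos]
    have harg : ((2 * (j : ℤ) + 1 : ℤ) : ℝ) = (2 * (j:ℝ) + 1) := by push_cast; ring
    have harg2 : (((2 * j + 1 : ℕ)) : ℝ) = (2 * (j:ℝ) + 1) := by push_cast; ring
    simp only [hg_def, hf_def, hF_def, harg, harg2]
    rw [abs_of_pos (Real.sin_pos_of_pos_of_lt_pi hlt hlt2)]
    congr 2
    ring
  have hMR : ((2 * N : ℕ) : ℝ) = 2 * (N : ℝ) := by push_cast; ring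
  have hF0 : F 0 = 0 := by
    simp only [hF_def, Nat.cast_zero, zero_mul, zero_div, Real.sin_zero]
    exact Real.zero_rpow (neg_ne_zero.mpr hs.ne')
  have hF'0 : F' 0 = 0 := by
    simp only [hF'_def, Nat.cast_zero, zero_mul, zero_div, Real.sin_zero]
    exact Real.zero_rpow (neg_ne_zero.mpr hs.ne')
  have hS2 : ∑ k ∈ Finset.Icc 1 (2 * N - 1), F k
      = ∑ m ∈ Finset.range N, F' m + ∑ m ∈ Finset.range N, F (2 * m + 1) := by
    rw [Icc_sum']
    have h4 : ∑ k ∈ Finset.range (2 * N), F k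
        = ∑ i ∈ Finset.range (2 * N - 1), F (i + 1) + F 0 := by
      rw [← Finset.sum_range_succ' F (2 * N - 1), Nat.sub_add_cancel (by omega)]
    have h5 : ∑ m ∈ Finset.range N, F (2 * m) = ∑ m ∈ Finset.range N, F' m := by
      refine Finset.sum_congr rfl fun m _ => ?_
      have hx : ((2 * m : ℕ) : ℝ) * Real.pi / (2 * (N : ℝ)) = (m : ℝ) * Real.pi / (N : ℝ) := by
        push_cast
        rw [mul_assoc]
        exact mul_div_mul_left _ _ (two_ne_zero (α := ℝ))
      simp only [hF_def, hF'_def, hx]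
    rw [← h5]
    rw [hF0] at h4
    linarith [sum_double' F N]
  have hS1 : ∑ k ∈ Finset.Icc 1 (N - 1), F' k = ∑ m ∈ Finset.range N, F' m := by
    rw [Icc_sum']
    have h4 : ∑ k ∈ Finset.range N, F' k
        = ∑ i ∈ Finset.range (N - 1), F' (i + 1) + F' 0 := by
      rw [← Finset.sum_range_succ' F' (N - 1), Nat.sub_add_cancel (by omega)]
    rw [hF'0] at h4
    linarith
  have hLrz2 : Lrz s (2 * N) / ((2 * N : ℕ) : ℝ)
      = (2:ℝ) ^ (-s) * ∑ k ∈ Finset.Icc 1 (2 * N - 1), F k := by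
    simp only [Lrz, hF_def, hMR]
    field_simp
    ring_nf
    refine Finset.sum_congr rfl fun x _ => ?_
    congr 2
    ring
  have hLrz1 : Lrz s N / (N : ℝ)
      = (2:ℝ) ^ (-s) * ∑ k ∈ Finset.Icc 1 (N - 1), F' k := by
    simp only [Lrz, hF'_def]
    field_simp
    ring_nf
    refine Finset.sum_congr rfl fun x _ => ?_
    congr 2
    ring
  rw [step1, step2, hLrz2, hLrz1, hS2, hS1]
  ring

theorem riesz_potential_at_midpoint (s : ℝ) (hs : 0 < s) (n : ℕ) (ρ : ℂ)
    (hρ : ‖ρ‖ = 1) (j0 : ℤ) :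
    ∑ j ∈ Finset.range (2 ^ n),
        ‖ρ * Complex.exp (((2 * Real.pi * (j : ℝ) / (2 ^ n : ℝ) : ℝ) : ℂ) * Complex.I)
              - ρ * Complex.exp (((Real.pi * (2 * (j0 : ℝ) + 1) / (2 ^ n : ℝ) : ℝ) : ℂ)
                  * Complex.I)‖ ^ (-s)
      = Lrz s (2 ^ (n + 1)) / (2 ^ (n + 1) : ℝ) - Lrz s (2 ^ n) / (2 ^ n : ℝ) := by
  have h2n : ((2 ^ n : ℕ) : ℝ) = (2 : ℝ) ^ n := by push_cast; ring
  have h2npos : (0:ℝ) < (2:ℝ) ^ n := by positivity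
  have hstep : ∑ j ∈ Finset.range (2 ^ n),
        ‖ρ * Complex.exp (((2 * Real.pi * (j : ℝ) / (2 ^ n : ℝ) : ℝ) : ℂ) * Complex.I)
              - ρ * Complex.exp (((Real.pi * (2 * (j0 : ℝ) + 1) / (2 ^ n : ℝ) : ℝ) : ℂ)
                  * Complex.I)‖ ^ (-s)
      = ∑ j ∈ Finset.range (2 ^ n),
        (2 * |Real.sin (Real.pi * (2 * (j : ℝ) - (2 * (j0 : ℝ) + 1))
          / (2 * ((2 ^ n : ℕ) : ℝ)))|) ^ (-s) := by
    refine Finset.sum_congr rfl fun j _ => ?_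
    rw [← mul_sub, norm_mul, hρ, one_mul, abs_exp_sub_exp']
    congr 2
    rw [h2n]
    field_simp
  rw [hstep, riesz_main_aux s hs (2 ^ n) (by positivity) j0]
  rw [show 2 * 2 ^ n = 2 ^ (n + 1) from by ring]
  congr 1
  · congr 1
    push_cast
    ring
  · congr 1
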